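/- Fix K ≥ 1 and, for each nonzero binary weight vector w ∈ {0,1}^K with w ≠ 0, a threshold γ_w ∈ ℝ. Then the acceptance region of the adaptively weighted (AW) statistic, namely the intersection over all such w of the sets { (z₁, …, z_K) ∈ ℝ^K : −∑_{k=1}^K w_k · log p(z_k) < γ_w }, where p(z) = 2(1 − Φ(|z|)), is a convex subset of ℝ^K. -/

import Mathlib

open MeasureTheory Real Set

/-- The standard normal density φ(t) = (1/√(2π))·exp(−t²/2). -/
noncomputable def stdNormalPDF (t : ℝ) : ℝ :=
  (Real.sqrt (2 * Real.pi))⁻¹ * Real.exp (-t ^ 2 / 2)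

/-- The standard normal cumulative distribution function Φ(t) = ∫_{−∞}^t φ(s) ds. -/
noncomputable def stdNormalCDF (t : ℝ) : ℝ :=
  ∫ s in Set.Iic t, stdNormalPDF s

/-- The two-sided p-value function p(z) = 2(1 − Φ(|z|)). -/
noncomputable def pValue (z : ℝ) : ℝ := 2 * (1 - stdNormalCDF |z|)

lemma pdf_pos (t : ℝ) : 0 < stdNormalPDF t := by
  unfold stdNormalPDF
  positivity

lemma pdf_eq (t : ℝ) : stdNormalPDF t = (Real.sqrt (2 * Real.pi))⁻¹ * Real.exp (-(1/2 : ℝ) * t ^ 2) := by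
  unfold stdNormalPDF; ring_nf

lemma pdf_integrable : Integrable stdNormalPDF := by
  have h := (integrable_exp_neg_mul_sq (by norm_num : (0:ℝ) < 1/2)).const_mul (Real.sqrt (2 * Real.pi))⁻¹
  exact h.congr (Filter.Eventually.of_forall fun t => (pdf_eq t).symm)

lemma pdf_integral : ∫ t, stdNormalPDF t = 1 := by
  have h : ∫ t : ℝ, Real.exp (-(1/2:ℝ) * t ^ 2) = Real.sqrt (Real.pi / (1/2)) := integral_gaussian _
  have : ∫ t, stdNormalPDF t = (Real.sqrt (2 * Real.pi))⁻¹ * Real.sqrt (Real.pi / (1/2)) := by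
    rw [← h, ← integral_const_mul]
    congr 1; funext t; rw [pdf_eq]
  rw [this]
  have : Real.pi / (1/2) = 2 * Real.pi := by ring
  rw [this, inv_mul_cancel₀]
  positivity

lemma pdf_continuous : Continuous stdNormalPDF := by
  unfold stdNormalPDF; continuity

lemma cdf_eq_interval (t : ℝ) : stdNormalCDF t = stdNormalCDF 0 + ∫ s in (0:ℝ)..t, stdNormalPDF s := by
  have h := intervalIntegral.integral_Iic_sub_Iic (μ := volume) (a := (0:ℝ)) (b := t)
    pdf_integrable.integrableOn pdf_integrable.integrableOn
  unfold stdNormalCDF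
  linarith

lemma cdf_hasDerivAt (t : ℝ) : HasDerivAt stdNormalCDF (stdNormalPDF t) t := by
  have h : HasDerivAt (fun u => ∫ s in (0:ℝ)..u, stdNormalPDF s) (stdNormalPDF t) t :=
    intervalIntegral.integral_hasDerivAt_right pdf_integrable.intervalIntegrable
      (pdf_continuous.stronglyMeasurableAtFilter _ _) pdf_continuous.continuousAt
  have := h.const_add (stdNormalCDF 0)
  refine this.congr_of_eventuallyEq (Filter.Eventually.of_forall fun u => (cdf_eq_interval u))

noncomputable def tail (t : ℝ) : ℝ := 1 - stdNormalCDF t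

lemma tail_eq (t : ℝ) : tail t = ∫ s in Set.Ioi t, stdNormalPDF s := by
  have h := intervalIntegral.integral_Iic_add_Ioi (μ := volume) (b := t)
    pdf_integrable.integrableOn pdf_integrable.integrableOn
  unfold tail stdNormalCDF
  rw [← pdf_integral, ← h]; ring

lemma tail_pos (t : ℝ) : 0 < tail t := by
  rw [tail_eq]
  rw [setIntegral_pos_iff_support_of_nonneg_ae]
  · have : Function.support stdNormalPDF = Set.univ := by
      ext x; simp [Function.support, (pdf_pos x).ne']
    rw [this]
    simp [Measure.restrict_apply]
  · exact Filter.Eventually.of_forall fun x => (pdf_pos x).le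
  · exact pdf_integrable.integrableOn

lemma tail_hasDerivAt (t : ℝ) : HasDerivAt tail (-stdNormalPDF t) t := by
  exact ((cdf_hasDerivAt t).const_sub 1)

lemma pdf_hasDerivAt (t : ℝ) : HasDerivAt stdNormalPDF (-t * stdNormalPDF t) t := by
  have h1 : HasDerivAt (fun s : ℝ => -s ^ 2 / 2) (-t) t := by
    have : HasDerivAt (fun s : ℝ => -s ^ 2 / 2) (-(2 * t ^ 1) / 2) t := by
      exact (((hasDerivAt_pow 2 t).neg).div_const 2)
    convert this using 1; push_cast; ring
  have h2 := (h1.exp).const_mul (Real.sqrt (2 * Real.pi))⁻¹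
  unfold stdNormalPDF
  exact h2.congr_deriv (by ring)

lemma pdf_tendsto_zero : Filter.Tendsto stdNormalPDF Filter.atTop (nhds 0) := by
  have h1 : Filter.Tendsto (fun t : ℝ => -t ^ 2 / 2) Filter.atTop Filter.atBot := by
    apply Filter.Tendsto.atBot_div_const (by norm_num)
    exact Filter.tendsto_neg_atBot_iff.mpr (Filter.tendsto_pow_atTop (by norm_num : (2:ℕ) ≠ 0))
  have h2 := Real.tendsto_exp_atBot.comp h1
  have h3 := h2.const_mul (Real.sqrt (2 * Real.pi))⁻¹
  rw [mul_zero] at h3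
  exact h3

lemma xpdf_integrableOn (t : ℝ) : IntegrableOn (fun s => s * stdNormalPDF s) (Set.Ioi t) := by
  have h := (integrable_mul_exp_neg_mul_sq (by norm_num : (0:ℝ) < 1/2)).const_mul (Real.sqrt (2 * Real.pi))⁻¹
  have h2 : Integrable (fun s : ℝ => s * stdNormalPDF s) := by
    refine h.congr (Filter.Eventually.of_forall fun s => ?_)
    simp only [pdf_eq]; ring
  exact h2.integrableOn

lemma integral_xpdf (t : ℝ) : ∫ s in Set.Ioi t, s * stdNormalPDF s = stdNormalPDF t := by
  have h : ∀ x ∈ Set.Ici t, HasDerivAt (fun s => -stdNormalPDF s) (x * stdNormalPDF x) x := by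
    intro x _
    exact (pdf_hasDerivAt x).neg.congr_deriv (by ring)
  have := MeasureTheory.integral_Ioi_of_hasDerivAt_of_tendsto' h (xpdf_integrableOn t)
    (by simpa using pdf_tendsto_zero.neg)
  simpa using this

lemma mills {t : ℝ} (ht : 0 ≤ t) : t * tail t ≤ stdNormalPDF t := by
  rw [tail_eq, ← integral_xpdf t, ← integral_const_mul]
  apply setIntegral_mono_on ((pdf_integrable.integrableOn).const_mul t) (xpdf_integrableOn t)
    measurableSet_Ioi
  intro s hs
  have hts : t ≤ s := le_of_lt hs
  exact mul_le_mul_of_nonneg_right hts (pdf_pos s).le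

noncomputable def hfun (t : ℝ) : ℝ := -Real.log (2 * tail t)

lemma hfun_hasDerivAt (t : ℝ) :
    HasDerivAt hfun (stdNormalPDF t / tail t) t := by
  have h1 : HasDerivAt (fun u => 2 * tail u) (2 * -stdNormalPDF t) t :=
    (tail_hasDerivAt t).const_mul 2
  have h2 := (h1.log (by have := tail_pos t; positivity)).neg
  exact h2.congr_deriv (by ring)

lemma hazard_hasDerivAt (t : ℝ) :
    HasDerivAt (fun u => stdNormalPDF u / tail u)
      ((-t * stdNormalPDF t * tail t + stdNormalPDF t * stdNormalPDF t) / (tail t) ^ 2) t := by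
  have := (pdf_hasDerivAt t).div (tail_hasDerivAt t) (tail_pos t).ne'
  exact this.congr_deriv (by ring)

lemma hazard_deriv_nonneg {t : ℝ} (ht : 0 ≤ t) :
    0 ≤ (-t * stdNormalPDF t * tail t + stdNormalPDF t * stdNormalPDF t) / (tail t) ^ 2 := by
  apply div_nonneg _ (sq_nonneg _)
  have h := mills ht
  nlinarith [pdf_pos t, (tail_pos t).le]

lemma hazard_monotoneOn : MonotoneOn (fun u => stdNormalPDF u / tail u) (Set.Ici 0) := by
  apply monotoneOn_of_deriv_nonneg (convex_Ici 0)
  · exact fun x _ => ((hazard_hasDerivAt x).continuousAt).continuousWithinAt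
  · intro x _
    exact (hazard_hasDerivAt x).differentiableAt.differentiableWithinAt
  · intro x hx
    rw [interior_Ici] at hx
    rw [(hazard_hasDerivAt x).deriv]
    exact hazard_deriv_nonneg (le_of_lt hx)

lemma hfun_convexOn : ConvexOn ℝ (Set.Ici 0) hfun := by
  have hmono : MonotoneOn (deriv hfun) (interior (Set.Ici (0:ℝ))) := by
    intro x hx y hy hxy
    rw [interior_Ici] at hx hy
    rw [(hfun_hasDerivAt x).deriv, (hfun_hasDerivAt y).deriv]
    exact hazard_monotoneOn (Set.mem_Ici.mpr (le_of_lt (Set.mem_Ioi.mp hx))) (Set.mem_Ici.mpr (le_of_lt (Set.mem_Ioi.mp hy))) hxy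
  exact hmono.convexOn_of_deriv (convex_Ici 0)
    (fun x _ => ((hfun_hasDerivAt x).continuousAt).continuousWithinAt)
    (fun x _ => (hfun_hasDerivAt x).differentiableAt.differentiableWithinAt)

lemma hfun_monotoneOn : MonotoneOn hfun (Set.Ici 0) := by
  apply monotoneOn_of_deriv_nonneg (convex_Ici 0)
  · exact fun x _ => ((hfun_hasDerivAt x).continuousAt).continuousWithinAt
  · intro x _
    exact (hfun_hasDerivAt x).differentiableAt.differentiableWithinAt
  · intro x _
    rw [(hfun_hasDerivAt x).deriv]
    exact div_nonneg (pdf_pos x).le (tail_pos x).le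

lemma abs_image_univ : (fun t : ℝ => |t|) '' Set.univ = Set.Ici 0 := by
  ext x
  simp only [Set.image_univ, Set.mem_range, Set.mem_Ici]
  constructor
  · rintro ⟨y, rfl⟩; exact abs_nonneg y
  · intro hx; exact ⟨x, abs_of_nonneg hx⟩

lemma neg_log_pValue_eq (z : ℝ) : -Real.log (pValue z) = hfun |z| := by
  unfold pValue hfun tail
  rfl

lemma gfun_convexOn : ConvexOn ℝ Set.univ (fun z => -Real.log (pValue z)) := by
  have habs : ConvexOn ℝ Set.univ (fun t : ℝ => |t|) := by
    exact convexOn_norm (convex_univ (𝕜 := ℝ) (E := ℝ))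
  have hcomp : ConvexOn ℝ Set.univ (hfun ∘ fun t : ℝ => |t|) := by
    refine ConvexOn.comp ?_ habs ?_
    · rw [abs_image_univ]; exact hfun_convexOn
    · rw [abs_image_univ]; exact hfun_monotoneOn
  exact hcomp.congr fun z _ => (neg_log_pValue_eq z).symm

/-- For K ≥ 1 and, for each nonzero binary weight vector w ∈ {0,1}^K, a threshold γ_w ∈ ℝ,
the acceptance region of the adaptively weighted (AW) statistic, namely the intersection
over all such w of { z ∈ ℝ^K : −∑_k w_k · log p(z_k) < γ_w }, is a convex subset of ℝ^K. -/
theorem stmt_5 (K : ℕ) (hK : 1 ≤ K) (γ : (Fin K → ℝ) → ℝ) :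
    Convex ℝ
      (⋂ w ∈ {w : Fin K → ℝ | (∀ k, w k = 0 ∨ w k = 1) ∧ w ≠ 0},
        {z : Fin K → ℝ | -∑ k, w k * Real.log (pValue (z k)) < γ w}) := by
  apply convex_iInter₂
  intro w hw
  obtain ⟨hw01, -⟩ := hw
  have hwnn : ∀ k, 0 ≤ w k := fun k => by rcases hw01 k with h | h <;> rw [h] <;> norm_num
  -- rewrite the set using g
  have hset : ∀ z : Fin K → ℝ,
      -∑ k, w k * Real.log (pValue (z k)) = ∑ k, w k * (-Real.log (pValue (z k))) := by
    intro z
    rw [← Finset.sum_neg_distrib]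
    congr 1; funext k; ring
  intro x hx y hy a b ha hb hab
  simp only [Set.mem_setOf_eq] at hx hy ⊢
  rw [hset] at hx hy ⊢
  set g : ℝ → ℝ := fun z => -Real.log (pValue z) with hg
  have hconv : ∀ k, g (a * x k + b * y k) ≤ a * g (x k) + b * g (y k) := by
    intro k
    exact gfun_convexOn.2 (Set.mem_univ (x k)) (Set.mem_univ (y k)) ha hb hab
  have hsum : ∑ k, w k * g (a • x k + b • y k) ≤
      a * (∑ k, w k * g (x k)) + b * (∑ k, w k * g (y k)) := by
    rw [Finset.mul_sum, Finset.mul_sum, ← Finset.sum_add_distrib]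
    apply Finset.sum_le_sum
    intro k _
    have := mul_le_mul_of_nonneg_left (hconv k) (hwnn k)
    simp only [smul_eq_mul]
    nlinarith [this]
  calc ∑ k, w k * g ((a • x + b • y) k) ≤ a * (∑ k, w k * g (x k)) + b * (∑ k, w k * g (y k)) := by
        simpa using hsum
    _ < a * γ w + b * γ w := by
        rcases lt_or_eq_of_le ha with ha' | ha'
        · have h1 : a * (∑ k, w k * g (x k)) < a * γ w := by
            exact mul_lt_mul_of_pos_left hx ha'
          have h2 : b * (∑ k, w k * g (y k)) ≤ b * γ w := mul_le_mul_of_nonneg_left hy.le hb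
          linarith
        · have hb' : 0 < b := by rw [← ha'] at hab; linarith
          have h1 : a * (∑ k, w k * g (x k)) ≤ a * γ w := mul_le_mul_of_nonneg_left hx.le ha
          have h2 : b * (∑ k, w k * g (y k)) < b * γ w := mul_lt_mul_of_pos_left hy hb'
          linarith
    _ = γ w := by rw [← add_mul, hab, one_mul]
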